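/- Let c_ε, c₀ : ℝ × [0,∞) × [0,T] → ℝ and c^B : ℝ × [0,∞) × [0,T] → ℝ. Suppose ‖∂_y c_ε(·,·,t) − ∂_y c₀(·,·,t) − ∂_z c^B(·, ·/√ε, t)‖_{L^∞} ≤ C ε^{1/8} for all ε ∈ (0, ε₀) and suppose there exist x₀, t₀ with ∂_z c^B(x₀, 0, t₀) ≠ 0 while ∂_z c^B(x₀, z, t₀) → 0 as z → ∞. Then ‖∂_y c_ε − ∂_y c₀‖_{L^∞} does not tend to 0 as ε → 0; in fact liminf_{ε→0} ‖∂_y c_ε(·,·,t₀) − ∂_y c₀(·,·,t₀)‖_{L^∞} ≥ |∂_z c^B(x₀,0,t₀)|. -/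

import Mathlib

open Filter

/-- Boundary layer effect: if the validated expansion
`‖∂_y c_ε − ∂_y c₀ − ∂_z c^B(·, ·/√ε, ·)‖_{L∞} ≤ C ε^{1/8}` holds with a
boundary-layer profile whose `z`-derivative is nonzero at `z = 0` (and decays as
`z → ∞`), then `‖∂_y c_ε − ∂_y c₀‖_{L∞}` does not tend to `0`: its liminf as
`ε → 0` is at least `|∂_z c^B(x₀,0,t₀)|`. -/
theorem boundary_layer_effect (cε : ℝ → ℝ → ℝ → ℝ → ℝ) (c0 cB : ℝ → ℝ → ℝ → ℝ)
    (C ε₀ : ℝ) (hC : 0 ≤ C) (hε₀ : 0 < ε₀) (x₀ t₀ : ℝ)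
    (hexp : ∀ ε : ℝ, 0 < ε → ε < ε₀ → ∀ x y t : ℝ, 0 < y →
      |deriv (fun y' => cε ε x y' t) y - deriv (fun y' => c0 x y' t) y
        - deriv (fun z' => cB x z' t) (y / Real.sqrt ε)| ≤ C * ε ^ ((1:ℝ)/8))
    (hcont : Continuous fun z => deriv (fun z' => cB x₀ z' t₀) z)
    (hne : deriv (fun z' => cB x₀ z' t₀) 0 ≠ 0)
    (hdec : Tendsto (fun z => deriv (fun z' => cB x₀ z' t₀) z) atTop (nhds 0)) :
    ∀ δ : ℝ, 0 < δ → ∃ ε₁ : ℝ, 0 < ε₁ ∧ ∀ ε : ℝ, 0 < ε → ε < ε₁ →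
      ∃ x y : ℝ, 0 < y ∧
        |deriv (fun y' => cε ε x y' t₀) y - deriv (fun y' => c0 x y' t₀) y| >
          |deriv (fun z' => cB x₀ z' t₀) 0| - δ := by
  intro δ hδ
  set g : ℝ → ℝ := fun z => deriv (fun z' => cB x₀ z' t₀) z with hg
  -- choose z₁ > 0 with |g z₁| > |g 0| - δ/2
  have hcontabs : ContinuousAt (fun z => |g z|) 0 := (hcont.abs).continuousAt
  obtain ⟨η, hη, hball⟩ := Metric.continuousAt_iff.mp hcontabs (δ/2) (by linarith)
  have hz₁pos : (0:ℝ) < η/2 := by linarith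
  have hz₁ : |g (η/2)| > |g 0| - δ/2 := by
    have := hball (x := η/2) (by rw [Real.dist_eq, sub_zero, abs_of_pos hz₁pos]; linarith)
    rw [Real.dist_eq] at this
    have := abs_lt.mp this
    linarith [this.1]
  set b : ℝ := δ / (2 * (C + 1)) with hb
  have hbpos : 0 < b := by positivity
  refine ⟨min ε₀ (b ^ (8:ℕ)), lt_min hε₀ (by positivity), ?_⟩
  intro ε hε hεlt
  have hεε₀ : ε < ε₀ := lt_of_lt_of_le hεlt (min_le_left _ _)
  have hεb : ε < b ^ (8:ℕ) := lt_of_lt_of_le hεlt (min_le_right _ _)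
  have hsqrt : 0 < Real.sqrt ε := Real.sqrt_pos.mpr hε
  set y : ℝ := (η/2) * Real.sqrt ε with hy
  have hypos : 0 < y := by positivity
  have hyz : y / Real.sqrt ε = η/2 := by
    field_simp [hy]
    ring
  have hexp' := hexp ε hε hεε₀ x₀ y t₀ hypos
  rw [hyz] at hexp'
  -- bound C * ε^{1/8} < δ/2
  have hrpow : ε ^ ((1:ℝ)/8) < b := by
    have h1 : ε ^ ((1:ℝ)/8) < (b ^ (8:ℕ)) ^ ((1:ℝ)/8) :=
      Real.rpow_lt_rpow (le_of_lt hε) hεb (by norm_num)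
    have h2 : (b ^ (8:ℕ)) ^ ((1:ℝ)/8) = b := by
      rw [← Real.rpow_natCast b 8, ← Real.rpow_mul (le_of_lt hbpos)]
      norm_num
    rwa [h2] at h1
  have hCε : C * ε ^ ((1:ℝ)/8) < δ/2 := by
    have h1 : C * ε ^ ((1:ℝ)/8) ≤ C * b :=
      mul_le_mul_of_nonneg_left (le_of_lt hrpow) hC
    have hC1 : (0:ℝ) < C + 1 := by linarith
    have heq : C * b = δ/2 * (C/(C+1)) := by
      rw [hb]; field_simp
    have hlt : C/(C+1) < 1 := (div_lt_one hC1).mpr (by linarith)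
    have h2 : C * b < δ/2 := by
      rw [heq]
      calc δ/2 * (C/(C+1)) < δ/2 * 1 := mul_lt_mul_of_pos_left hlt (by linarith)
        _ = δ/2 := by ring
    linarith
  refine ⟨x₀, y, hypos, ?_⟩
  have habs : |deriv (fun y' => cε ε x₀ y' t₀) y - deriv (fun y' => c0 x₀ y' t₀) y|
      ≥ |g (η/2)| - C * ε ^ ((1:ℝ)/8) := by
    have htri := abs_sub_abs_le_abs_sub
      (g (η/2)) (deriv (fun y' => cε ε x₀ y' t₀) y - deriv (fun y' => c0 x₀ y' t₀) y)
    have hcomm : |g (η/2) - (deriv (fun y' => cε ε x₀ y' t₀) y - deriv (fun y' => c0 x₀ y' t₀) y)|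
        = |deriv (fun y' => cε ε x₀ y' t₀) y - deriv (fun y' => c0 x₀ y' t₀) y - g (η/2)| :=
      abs_sub_comm _ _
    rw [hcomm] at htri
    have : |deriv (fun y' => cε ε x₀ y' t₀) y - deriv (fun y' => c0 x₀ y' t₀) y - g (η/2)|
        ≤ C * ε ^ ((1:ℝ)/8) := hexp'
    linarith [abs_nonneg (deriv (fun y' => cε ε x₀ y' t₀) y - deriv (fun y' => c0 x₀ y' t₀) y)]
  calc |deriv (fun y' => cε ε x₀ y' t₀) y - deriv (fun y' => c0 x₀ y' t₀) y|
      ≥ |g (η/2)| - C * ε ^ ((1:ℝ)/8) := habs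
    _ > (|g 0| - δ/2) - δ/2 := by linarith
    _ = |g 0| - δ := by ring
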